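/- Under the setting of the previous item, if additionally ‖λ‖ ≤ M and ρ ≥ M/((1−ν)τθ̄) for some ν ∈ (0,1), τθ̄ ∈ (0,1] with θ ≥ τθ̄, then the local merit-model reduction Δφ = −∇fᵀΔx − ½ ΔxᵀBΔx + ρθ‖c‖ satisfies Δφ ≥ ½ ΔxᵀBΔx + νρθ‖c‖. -/

import Mathlib

open Matrix

/-- Merit-model reduction (Lemma 1). Under the KKT conditions of the SQP subproblem,
if additionally `‖λ‖ ≤ M` and `ρ ≥ M/((1−ν) τθ̄)` with `ν ∈ (0,1)`, `τθ̄ ∈ (0,1]`,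
`θ ≥ τθ̄`, then the local merit-model reduction
`Δφ = −∇fᵀΔx − ½ ΔxᵀBΔx + ρθ‖c‖` satisfies `Δφ ≥ ½ ΔxᵀBΔx + νρθ‖c‖`. -/
theorem merit_model_reduction {d m : ℕ}
    (B : Matrix (Fin d) (Fin d) ℝ) (κ₁ κ₂ : ℝ) (hκ₁ : 0 < κ₁) (hκ₁₂ : κ₁ ≤ κ₂)
    (hBlow : ∀ z : Fin d → ℝ, κ₁ * (z ⬝ᵥ z) ≤ z ⬝ᵥ B.mulVec z)
    (hBup : ∀ z : Fin d → ℝ, z ⬝ᵥ B.mulVec z ≤ κ₂ * (z ⬝ᵥ z))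
    (gradf : Fin d → ℝ) (c : Fin m → ℝ) (Jc : Matrix (Fin m) (Fin d) ℝ)
    (x ℓ u Δx : Fin d → ℝ) (lam : Fin m → ℝ) (μ₁ μ₂ : Fin d → ℝ)
    (θ : ℝ) (hθ : θ ∈ Set.Icc (0 : ℝ) 1)
    (hx1 : ℓ ≤ x) (hx2 : x ≤ u)
    (hstat : gradf + B.mulVec Δx + Jc.transpose.mulVec lam - μ₁ + μ₂ = 0)
    (hlin : θ • c + Jc.mulVec Δx = 0)
    (hbox1 : ℓ ≤ x + Δx) (hbox2 : x + Δx ≤ u)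
    (hμ₁ : 0 ≤ μ₁) (hμ₂ : 0 ≤ μ₂)
    (hcomp1 : μ₁ ⬝ᵥ (ℓ - x - Δx) = 0) (hcomp2 : μ₂ ⬝ᵥ (x + Δx - u) = 0)
    (M ν τθbar ρ : ℝ)
    (hM : Real.sqrt (lam ⬝ᵥ lam) ≤ M)
    (hν : ν ∈ Set.Ioo (0 : ℝ) 1) (hτθbar : τθbar ∈ Set.Ioc (0 : ℝ) 1)
    (hθlow : τθbar ≤ θ)
    (hρ : M / ((1 - ν) * τθbar) ≤ ρ) :
    (1 / 2 : ℝ) * (Δx ⬝ᵥ B.mulVec Δx) + ν * ρ * θ * Real.sqrt (c ⬝ᵥ c) ≤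
      -(gradf ⬝ᵥ Δx) - (1 / 2 : ℝ) * (Δx ⬝ᵥ B.mulVec Δx)
        + ρ * θ * Real.sqrt (c ⬝ᵥ c) := by
  obtain ⟨hθ0, hθ1⟩ := hθ
  obtain ⟨hν0, hν1⟩ := hν
  obtain ⟨hτ0, hτ1⟩ := hτθbar
  set s := Real.sqrt (c ⬝ᵥ c) with hs
  have hs0 : 0 ≤ s := Real.sqrt_nonneg _
  -- Cauchy-Schwarz : lam ⬝ᵥ c ≤ ‖lam‖ ‖c‖
  have hCS : lam ⬝ᵥ c ≤ Real.sqrt (lam ⬝ᵥ lam) * s := by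
    have h1 : (lam ⬝ᵥ c) ^ 2 ≤ (lam ⬝ᵥ lam) * (c ⬝ᵥ c) := by
      have := Finset.sum_mul_sq_le_sq_mul_sq Finset.univ lam c
      simpa [dotProduct, sq] using this
    calc lam ⬝ᵥ c ≤ |lam ⬝ᵥ c| := le_abs_self _
      _ = Real.sqrt ((lam ⬝ᵥ c) ^ 2) := (Real.sqrt_sq_eq_abs _).symm
      _ ≤ Real.sqrt ((lam ⬝ᵥ lam) * (c ⬝ᵥ c)) := Real.sqrt_le_sqrt h1
      _ = Real.sqrt (lam ⬝ᵥ lam) * s := Real.sqrt_mul (Finset.sum_nonneg fun i _ => mul_self_nonneg _) _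
  have hM0 : 0 ≤ M := le_trans (Real.sqrt_nonneg _) hM
  -- key identity from stationarity
  have hdot : (gradf + B.mulVec Δx + Jc.transpose.mulVec lam - μ₁ + μ₂) ⬝ᵥ Δx = 0 := by
    rw [hstat]; simp
  have hJ : Jc.mulVec Δx = -(θ • c) := by
    funext i
    have := congrFun hlin i
    simp only [Pi.add_apply, Pi.zero_apply, Pi.neg_apply] at this ⊢
    linarith
  have hJt : Jc.transpose.mulVec lam ⬝ᵥ Δx = -(θ * (lam ⬝ᵥ c)) := by
    rw [show Jc.transpose.mulVec lam ⬝ᵥ Δx = lam ⬝ᵥ Jc.mulVec Δx by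
      rw [dotProduct_comm, dotProduct_mulVec, vecMul_transpose, dotProduct_comm]]
    rw [hJ]
    simp [dotProduct_comm, mul_comm]
  have hμ1Δ : μ₁ ⬝ᵥ Δx = μ₁ ⬝ᵥ (ℓ - x) := by
    have : μ₁ ⬝ᵥ (ℓ - x) - μ₁ ⬝ᵥ Δx = 0 := by
      rw [← dotProduct_sub]; exact hcomp1
    linarith
  have hμ2Δ : μ₂ ⬝ᵥ Δx = μ₂ ⬝ᵥ (u - x) := by
    have : μ₂ ⬝ᵥ Δx - μ₂ ⬝ᵥ (u - x) = 0 := by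
      rw [← dotProduct_sub]; rw [← hcomp2]; congr 1; funext i; simp only [Pi.sub_apply, Pi.add_apply]; ring
    linarith
  have hμ1neg : μ₁ ⬝ᵥ (ℓ - x) ≤ 0 := by
    apply Finset.sum_nonpos
    intro i _
    exact mul_nonpos_of_nonneg_of_nonpos (hμ₁ i) (by simpa using hx1 i)
  have hμ2pos : 0 ≤ μ₂ ⬝ᵥ (u - x) := by
    apply Finset.sum_nonneg
    intro i _
    exact mul_nonneg (hμ₂ i) (by simpa using hx2 i)
  have hkey : gradf ⬝ᵥ Δx + Δx ⬝ᵥ B.mulVec Δx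
      = θ * (lam ⬝ᵥ c) + μ₁ ⬝ᵥ (ℓ - x) - μ₂ ⬝ᵥ (u - x) := by
    have hexp : gradf ⬝ᵥ Δx + B.mulVec Δx ⬝ᵥ Δx + Jc.transpose.mulVec lam ⬝ᵥ Δx
        - μ₁ ⬝ᵥ Δx + μ₂ ⬝ᵥ Δx = 0 := by
      simpa [add_dotProduct, sub_dotProduct] using hdot
    have hcommB : B.mulVec Δx ⬝ᵥ Δx = Δx ⬝ᵥ B.mulVec Δx := dotProduct_comm _ _
    rw [hcommB, hJt, hμ1Δ, hμ2Δ] at hexp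
    linarith
  -- bound : gradf⬝Δx + Q ≤ θ M s
  have hbound : gradf ⬝ᵥ Δx + Δx ⬝ᵥ B.mulVec Δx ≤ θ * (M * s) := by
    rw [hkey]
    have h1 : θ * (lam ⬝ᵥ c) ≤ θ * (M * s) := by
      apply mul_le_mul_of_nonneg_left _ hθ0
      exact hCS.trans (mul_le_mul_of_nonneg_right hM hs0)
    linarith
  -- M ≤ (1-ν) ρ
  have hρ0 : 0 ≤ ρ := le_trans (div_nonneg hM0 (le_of_lt (mul_pos (by linarith) hτ0))) hρ
  have hMρ : M ≤ (1 - ν) * ρ := by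
    have h1 : M ≤ ρ * ((1 - ν) * τθbar) :=
      (div_le_iff₀ (mul_pos (by linarith : (0:ℝ) < 1 - ν) hτ0)).mp hρ
    nlinarith
  have hfinal : θ * (M * s) ≤ (1 - ν) * ρ * θ * s := by
    nlinarith [mul_nonneg hθ0 hs0]
  nlinarith
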